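/- arXiv:hep-th/0602041 — 4 statements merged into one kernel-verified Lean document; each statement's English description precedes it below -/
import Mathlib

section
/- (Combinatorial form of Lemma 1.) Let Q be a quiver, let ω be a function assigning to each arrow of Q a displacement vector in ℤ², let S ⊆ ℤ² be a finite set that positively spans ℝ², and for each s ∈ S let φ_s be a function from the arrows of Q to the natural numbers ℕ. Assume: (a) for every oriented cycle γ in Q and every s ∈ S, the sum of φ_s(a) over the arrows a of γ equals ⟨s, Σ_{a∈γ} ω(a)⟩; and (b) for every arrow a of Q there exists s ∈ S with φ_s(a) > 0. Then Q contains no oriented cycle. -/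
open Quiver

/-- Sum of the values of a function on arrows along a path in a quiver. -/
def pathSum {V : Type*} [Quiver V] {M : Type*} [AddCommMonoid M]
    (f : ∀ {u v : V}, (u ⟶ v) → M) {u : V} : ∀ {v : V}, Path u v → M
  | _, Path.nil => 0
  | _, Path.cons p a => pathSum f p + f a

private lemma pathSum_nonneg' {V : Type*} [Quiver V]
    (f : ∀ {u v : V}, (u ⟶ v) → ℕ) {u : V} : ∀ {v : V} (p : Path u v),
    0 ≤ pathSum (fun {u v} (a : u ⟶ v) => (f a : ℤ)) p
  | _, Path.nil => le_refl 0
  | _, Path.cons p a => by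
      have := pathSum_nonneg' f p
      simp only [pathSum]
      positivity

/-- Combinatorial form of Lemma 1: if `ω` assigns displacement vectors in `ℤ²` to arrows,
`S ⊆ ℤ²` positively spans `ℝ²`, and for each `s ∈ S` the nonnegative weight `φ s` sums along
every oriented cycle `γ` to `⟨s, Σ_{a∈γ} ω(a)⟩`, while every arrow has positive `φ s` weight
for some `s ∈ S`, then the quiver has no oriented cycle. -/
theorem no_oriented_cycle_of_matching_weights {V : Type*} [Quiver V]
    (ω : ∀ {u v : V}, (u ⟶ v) → ℤ × ℤ)
    (S : Finset (ℤ × ℤ))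
    (hspan : ∀ x : ℝ × ℝ, ∃ c : ℤ × ℤ → ℝ, (∀ s ∈ S, 0 ≤ c s) ∧
      x = ∑ s ∈ S, c s • (((s.1 : ℝ), (s.2 : ℝ)) : ℝ × ℝ))
    (φ : ℤ × ℤ → ∀ {u v : V}, (u ⟶ v) → ℕ)
    (ha : ∀ s ∈ S, ∀ (v : V) (γ : Quiver.Path v v), γ.length ≠ 0 →
      (pathSum (fun {u v} (a : u ⟶ v) => (φ s a : ℤ)) γ) =
        s.1 * (pathSum (fun {u v} (a : u ⟶ v) => ω a) γ).1 +
        s.2 * (pathSum (fun {u v} (a : u ⟶ v) => ω a) γ).2)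
    (hb : ∀ (u v : V) (a : u ⟶ v), ∃ s ∈ S, 0 < φ s a) :
    ∀ (v : V) (γ : Quiver.Path v v), γ.length = 0 := by
  intro v γ
  by_contra hγ
  set d : ℤ × ℤ := pathSum (fun {u v} (a : u ⟶ v) => ω a) γ with hd
  -- each ⟨s, d⟩ is nonnegative
  have hsd : ∀ s ∈ S, (0 : ℤ) ≤ s.1 * d.1 + s.2 * d.2 := by
    intro s hs
    rw [← ha s hs v γ hγ]
    exact pathSum_nonneg' (fun {u v} a => φ s a) γ
  -- d = 0
  obtain ⟨c, hc, hx⟩ := hspan (-(d.1 : ℝ), -(d.2 : ℝ))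
  have h1 : -((d.1 : ℝ)) = ∑ s ∈ S, c s * (s.1 : ℝ) := by
    have := congrArg Prod.fst hx
    simpa [Prod.fst_sum, Prod.snd_sum] using this
  have h2 : -((d.2 : ℝ)) = ∑ s ∈ S, c s * (s.2 : ℝ) := by
    have := congrArg Prod.snd hx
    simpa [Prod.fst_sum, Prod.snd_sum] using this
  have key : -((d.1 : ℝ) * d.1 + (d.2 : ℝ) * d.2)
      = ∑ s ∈ S, c s * ((s.1 : ℝ) * d.1 + (s.2 : ℝ) * d.2) := by
    have := congrArg (· * (d.1 : ℝ)) h1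
    have := congrArg (· * (d.2 : ℝ)) h2
    rw [neg_add]
    rw [show -((d.1 : ℝ) * d.1) = (∑ s ∈ S, c s * (s.1 : ℝ)) * d.1 by
      rw [← h1]; ring,
      show -((d.2 : ℝ) * d.2) = (∑ s ∈ S, c s * (s.2 : ℝ)) * d.2 by
      rw [← h2]; ring, Finset.sum_mul, Finset.sum_mul, ← Finset.sum_add_distrib]
    apply Finset.sum_congr rfl
    intro s _
    ring
  have hnn : (0 : ℝ) ≤ ∑ s ∈ S, c s * ((s.1 : ℝ) * d.1 + (s.2 : ℝ) * d.2) := by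
    apply Finset.sum_nonneg
    intro s hs
    apply mul_nonneg (hc s hs)
    have := hsd s hs
    exact_mod_cast this
  have hsq : (d.1 : ℝ) * d.1 + (d.2 : ℝ) * d.2 ≤ 0 := by
    nlinarith [key, hnn]
  have hd1 : d.1 = 0 := by
    have h1' : (d.1 : ℝ) = 0 := by nlinarith [mul_self_nonneg (d.1 : ℝ), mul_self_nonneg (d.2 : ℝ)]
    exact_mod_cast h1'
  have hd2 : d.2 = 0 := by
    have h2' : (d.2 : ℝ) = 0 := by nlinarith [mul_self_nonneg (d.1 : ℝ), mul_self_nonneg (d.2 : ℝ)]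
    exact_mod_cast h2'
  -- hence each φ-sum is 0
  cases γ with
  | nil => exact hγ rfl
  | cons p a =>
    obtain ⟨s, hs, hpos⟩ := hb _ _ a
    have htot := ha s hs v (p.cons a) hγ
    rw [← hd, hd1, hd2] at htot
    simp only [mul_zero, add_zero] at htot
    have hps := pathSum_nonneg' (fun {u v} a => φ s a) p
    simp only [pathSum] at htot
    have : (φ s a : ℤ) ≤ 0 := by linarith
    have : φ s a = 0 := by exact_mod_cast le_antisymm this (Nat.cast_nonneg _)
    omega
end

section
/- Take the fan of ℙ²: v_1 = (1,0), v_2 = (0,1), v_3 = (−1,−1), so ℓ_1(x) = 1 + x_1, ℓ_2(x) = 1 + x_2, ℓ_3(x) = 1 − x_1 − x_2, on the open triangle U = {x ∈ ℝ² : x_1 > −1, x_2 > −1, x_1 + x_2 < 1}. Let H(x)_{ij} = Σ_{r=1}^3 v_{r,i}v_{r,j}/(2ℓ_r(x)) and A_r(x) = ½ H(x)^{-1}(v_r/ℓ_r(x)). Then for all x ∈ U: A_1(x) = (−(x_1 − 2)/3, −(1 + x_2)/3), A_2(x) = (−(1 + x_1)/3, −(x_2 − 2)/3), and A_3(x) =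 (−(1 + x_1)/3, −(1 + x_2)/3). Consequently A_1 − A_3 ≡ (1,0) and A_2 − A_3 ≡ (0,1), so the three potentials are gauge-equivalent by integer shifts and determine the same point on the unit Wilson-line torus. -/
set_option maxHeartbeats 1000000 in
/-- Explicit canonical vector potentials for `ℙ²` (equations (4.24)–(4.26)):
with fan `v₁ = (1,0)`, `v₂ = (0,1)`, `v₃ = (−1,−1)`, the canonical potentials
`A_r = ½ H⁻¹ (v_r/ℓ_r)` take the closed forms below on the open triangle, and the
differences `A₁ − A₃ = (1,0)`, `A₂ − A₃ = (0,1)` are constant integer vectors. -/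
theorem canonical_potentials_P2
    (v : Fin 3 → Fin 2 → ℝ) (hv : v = ![![1, 0], ![0, 1], ![-1, -1]])
    (ℓ : Fin 3 → (Fin 2 → ℝ) → ℝ)
    (hℓ : ∀ r x, ℓ r x = (∑ i, x i * v r i) + 1)
    (U : Set (Fin 2 → ℝ))
    (hU : U = {x | -1 < x 0 ∧ -1 < x 1 ∧ x 0 + x 1 < 1})
    (H : (Fin 2 → ℝ) → Matrix (Fin 2) (Fin 2) ℝ)
    (hH : ∀ x i j, H x i j = ∑ r, v r i * v r j / (2 * ℓ r x))
    (A : Fin 3 → (Fin 2 → ℝ) → (Fin 2 → ℝ))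
    (hA : ∀ r x, A r x = (1 / 2 : ℝ) • ((H x)⁻¹).mulVec ((ℓ r x)⁻¹ • v r)) :
    ∀ x ∈ U,
      A 0 x = ![-(x 0 - 2) / 3, -(1 + x 1) / 3] ∧
      A 1 x = ![-(1 + x 0) / 3, -(x 1 - 2) / 3] ∧
      A 2 x = ![-(1 + x 0) / 3, -(1 + x 1) / 3] ∧
      A 0 x - A 2 x = ![1, 0] ∧
      A 1 x - A 2 x = ![0, 1] := by
  subst hv hU
  intro x hx
  obtain ⟨h0, h1, h2⟩ := hx
  set a : ℝ := 1 + x 0 with ha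
  set b : ℝ := 1 + x 1 with hb
  set c : ℝ := 1 - x 0 - x 1 with hc
  have hL0 : ℓ 0 x = a := by rw [hℓ]; simp [Fin.sum_univ_two, ha]; ring
  have hL1 : ℓ 1 x = b := by rw [hℓ]; simp [Fin.sum_univ_two, hb]; ring
  have hL2 : ℓ 2 x = c := by rw [hℓ]; simp [Fin.sum_univ_two, hc]; ring
  have hapos : 0 < a := by simp only [ha]; linarith
  have hbpos : 0 < b := by simp only [hb]; linarith
  have hcpos : 0 < c := by simp only [hc]; linarith
  have ha' : a ≠ 0 := ne_of_gt hapos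
  have hb' : b ≠ 0 := ne_of_gt hbpos
  have hc' : c ≠ 0 := ne_of_gt hcpos
  have hHx : H x = !![1/(2*a) + 1/(2*c), 1/(2*c); 1/(2*c), 1/(2*b) + 1/(2*c)] := by
    ext i j
    rw [hH, Fin.sum_univ_three, hL0, hL1, hL2]
    fin_cases i <;> fin_cases j <;> simp <;> ring
  have hinv : (H x)⁻¹ =
      !![2/3 * (a*(b+c)), -(2/3 * (a*b)); -(2/3 * (a*b)), 2/3 * (b*(a+c))] := by
    apply Matrix.inv_eq_right_inv
    rw [hHx]
    ext i j
    fin_cases i <;> fin_cases j <;>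
      · simp [Matrix.mul_apply, Fin.sum_univ_two]
        field_simp
        ring
  have e0 : A 0 x = ![-(x 0 - 2) / 3, -(1 + x 1) / 3] := by
    rw [hA, hinv, hL0]
    funext i
    fin_cases i <;>
      · simp [Matrix.mulVec, dotProduct, Fin.sum_univ_two, ha, hb, hc]
        field_simp [(by linarith : (0:ℝ) < 1 + x 0).ne', (by linarith : (0:ℝ) < 1 + x 1).ne',
          (by linarith : (0:ℝ) < 1 - x 0 - x 1).ne', (by linarith : (0:ℝ) < 1 - x 1 - x 0).ne']
        ring
  have e1 : A 1 x = ![-(1 + x 0) / 3, -(x 1 - 2) / 3] := by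
    rw [hA, hinv, hL1]
    funext i
    fin_cases i <;>
      · simp [Matrix.mulVec, dotProduct, Fin.sum_univ_two, ha, hb, hc]
        field_simp [(by linarith : (0:ℝ) < 1 + x 0).ne', (by linarith : (0:ℝ) < 1 + x 1).ne',
          (by linarith : (0:ℝ) < 1 - x 0 - x 1).ne', (by linarith : (0:ℝ) < 1 - x 1 - x 0).ne']
        ring
  have e2 : A 2 x = ![-(1 + x 0) / 3, -(1 + x 1) / 3] := by
    rw [hA, hinv, hL2]
    funext i
    fin_cases i <;>
      · simp [Matrix.mulVec, dotProduct, Fin.sum_univ_two, ha, hb, hc]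
        field_simp [(by linarith : (0:ℝ) < 1 + x 0).ne', (by linarith : (0:ℝ) < 1 + x 1).ne',
          (by linarith : (0:ℝ) < 1 - x 0 - x 1).ne', (by linarith : (0:ℝ) < 1 - x 1 - x 0).ne']
        ring
  refine ⟨e0, e1, e2, ?_, ?_⟩
  · rw [e0, e2]; funext i; fin_cases i <;> simp <;> ring
  · rw [e1, e2]; funext i; fin_cases i <;> simp <;> ring
end

section
/- Let v_1, …, v_n ∈ ℝ² span ℝ², let ℓ_r(x) = ⟨x, v_r⟩ + 1, let U = {x ∈ ℝ² : ℓ_r(x) > 0 for all r}, let H(x)_{ij} = Σ_r v_{r,i}v_{r,j}/(2ℓ_r(x)), and let A_r(x) = ½ H(x)^{-1}(v_r/ℓ_r(x)). Let c ∈ ℝ² be a corner of the polytope, i.e. there are indices p ≠ q with ℓ_p(c) = ℓ_q(c) = 0, the vectors v_p and v_q linearly independent, and ℓ_r(c) > 0 for all r ∉ {p, q}. Then for every r ∉ {p, q}, A_r(x) → 0 as x → c with x ∈ U. -/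
open Filter Matrix Finset

lemma cross_ne_zero_of_li {a b : Fin 2 → ℝ} (h : LinearIndependent ℝ ![a, b]) :
    a 0 * b 1 - a 1 * b 0 ≠ 0 := by
  rw [linearIndependent_fin2] at h
  obtain ⟨hb, hab⟩ := h
  simp only [Matrix.cons_val_one, Matrix.head_cons, Matrix.cons_val_zero] at hb hab
  intro hc
  have hb' : b 0 ≠ 0 ∨ b 1 ≠ 0 := by
    by_contra hcon
    push_neg at hcon
    exact hb (funext fun i => by fin_cases i <;> simp [hcon.1, hcon.2])
  rcases hb' with h0 | h1
  · apply hab (a 0 / b 0)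
    funext i
    fin_cases i
    · simp only [Pi.smul_apply, smul_eq_mul, Fin.zero_eta, Fin.mk_one, Fin.isValue]
      field_simp
    · simp only [Pi.smul_apply, smul_eq_mul, Fin.zero_eta, Fin.mk_one, Fin.isValue]
      field_simp
      nlinarith [hc]
  · apply hab (a 1 / b 1)
    funext i
    fin_cases i
    · simp only [Pi.smul_apply, smul_eq_mul, Fin.zero_eta, Fin.mk_one, Fin.isValue]
      field_simp
      nlinarith [hc]
    · simp only [Pi.smul_apply, smul_eq_mul, Fin.zero_eta, Fin.mk_one, Fin.isValue]
      field_simp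

lemma det_formula {n : ℕ} (v : Fin n → Fin 2 → ℝ) (L : Fin n → ℝ) (hL : ∀ s, L s ≠ 0)
    (H : Matrix (Fin 2) (Fin 2) ℝ) (hH : ∀ i j, H i j = ∑ r, v r i * v r j / (2 * L r)) :
    H.det = ∑ a, ∑ b, (v a 0 * v b 1 - v a 1 * v b 0) ^ 2 / (8 * L a * L b) := by
  set F : Fin n → Fin n → ℝ := fun a b =>
    v a 0 * v a 0 / (2 * L a) * (v b 1 * v b 1 / (2 * L b)) -
      v a 0 * v a 1 / (2 * L a) * (v b 1 * v b 0 / (2 * L b)) with hF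
  set G : Fin n → Fin n → ℝ := fun a b =>
    (v a 0 * v b 1 - v a 1 * v b 0) ^ 2 / (8 * L a * L b) with hG
  have hFG : ∀ a b, F a b + F b a = G a b + G b a := by
    intro a b
    have ha := hL a
    have hb := hL b
    simp only [hF, hG]
    field_simp
    ring
  have hdet : H.det = ∑ a, ∑ b, F a b := by
    rw [Matrix.det_fin_two, hH, hH, hH, hH, Finset.sum_mul_sum, Finset.sum_mul_sum,
      ← Finset.sum_sub_distrib]
    exact Finset.sum_congr rfl fun a _ => by rw [← Finset.sum_sub_distrib]
  have h1 : ∑ a, ∑ b, F a b = ∑ a, ∑ b, F b a := Finset.sum_comm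
  have h2 : ∑ a, ∑ b, G a b = ∑ a, ∑ b, G b a := Finset.sum_comm
  have h3 : ((∑ a, ∑ b, F a b) + ∑ a, ∑ b, F b a) = (∑ a, ∑ b, G a b) + ∑ a, ∑ b, G b a := by
    rw [← Finset.sum_add_distrib, ← Finset.sum_add_distrib]
    refine Finset.sum_congr rfl fun a _ => ?_
    rw [← Finset.sum_add_distrib, ← Finset.sum_add_distrib]
    exact Finset.sum_congr rfl fun b _ => hFG a b
  linarith

lemma det_lower {n : ℕ} (v : Fin n → Fin 2 → ℝ) (L : Fin n → ℝ) (hL : ∀ s, 0 < L s)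
    (H : Matrix (Fin 2) (Fin 2) ℝ) (hH : ∀ i j, H i j = ∑ r, v r i * v r j / (2 * L r))
    (p q : Fin n) (hpq : p ≠ q) :
    (v p 0 * v q 1 - v p 1 * v q 0) ^ 2 / (4 * L p * L q) ≤ H.det := by
  rw [det_formula v L (fun s => (hL s).ne') H hH]
  set G : Fin n → Fin n → ℝ := fun a b =>
    (v a 0 * v b 1 - v a 1 * v b 0) ^ 2 / (8 * L a * L b) with hG
  have hnn : ∀ a b, 0 ≤ G a b := fun a b => by
    have := hL a; have := hL b
    exact div_nonneg (sq_nonneg _) (by positivity)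
  have key : (v p 0 * v q 1 - v p 1 * v q 0) ^ 2 / (4 * L p * L q) = G p q + G q p := by
    have hp := (hL p).ne'
    have hq := (hL q).ne'
    simp only [hG]
    field_simp
    ring
  rw [key]
  calc G p q + G q p ≤ (∑ b, G p b) + ∑ b, G q b := by
        gcongr
        · exact Finset.single_le_sum (fun b _ => hnn p b) (Finset.mem_univ q)
        · exact Finset.single_le_sum (fun b _ => hnn q b) (Finset.mem_univ p)
    _ = ∑ a ∈ ({p, q} : Finset (Fin n)), ∑ b, G a b := by
        rw [Finset.sum_pair hpq]
    _ ≤ ∑ a, ∑ b, G a b := by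
        refine Finset.sum_le_sum_of_subset_of_nonneg (Finset.subset_univ _) ?_
        exact fun a _ _ => Finset.sum_nonneg fun b _ => hnn a b

lemma adj_mulVec_formula {n : ℕ} (v : Fin n → Fin 2 → ℝ) (L : Fin n → ℝ)
    (H : Matrix (Fin 2) (Fin 2) ℝ) (hH : ∀ i j, H i j = ∑ r, v r i * v r j / (2 * L r))
    (w : Fin 2 → ℝ) (i : Fin 2) :
    H.adjugate.mulVec w i =
      ∑ s, (if i = 0 then v s 1 else -v s 0) * (w 0 * v s 1 - w 1 * v s 0) / (2 * L s) := by
  have hstep : H.adjugate.mulVec w i =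
      (if i = 0 then H 1 1 * w 0 - H 0 1 * w 1 else H 0 0 * w 1 - H 1 0 * w 0) := by
    rw [Matrix.adjugate_fin_two]
    fin_cases i <;>
      simp [Matrix.mulVec, dotProduct, Fin.sum_univ_two, Matrix.vecHead, Matrix.vecTail] <;> ring
  by_cases hi : i = 0
  · rw [hstep, if_pos hi, hH 1 1, hH 0 1, Finset.sum_mul, Finset.sum_mul,
      ← Finset.sum_sub_distrib]
    exact Finset.sum_congr rfl fun s _ => by rw [if_pos hi]; ring
  · rw [hstep, if_neg hi, hH 0 0, hH 1 0, Finset.sum_mul, Finset.sum_mul,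
      ← Finset.sum_sub_distrib]
    exact Finset.sum_congr rfl fun s _ => by rw [if_neg hi]; ring

/-- The canonical vector potentials `A_r` vanish in the limit at every corner `c` of the
moment polytope at which they are well defined, i.e. for all `r` with `ℓ_r(c) > 0`. -/
theorem canonical_potential_vanishes_at_corner {n : ℕ} (v : Fin n → Fin 2 → ℝ)
    (hspan : Submodule.span ℝ (Set.range v) = ⊤)
    (ℓ : Fin n → (Fin 2 → ℝ) → ℝ)
    (hℓ : ∀ r x, ℓ r x = (∑ i, x i * v r i) + 1)
    (U : Set (Fin 2 → ℝ))
    (hU : U = {x | ∀ r, 0 < ℓ r x})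
    (H : (Fin 2 → ℝ) → Matrix (Fin 2) (Fin 2) ℝ)
    (hH : ∀ x i j, H x i j = ∑ r, v r i * v r j / (2 * ℓ r x))
    (A : Fin n → (Fin 2 → ℝ) → (Fin 2 → ℝ))
    (hA : ∀ r x, A r x = (1 / 2 : ℝ) • ((H x)⁻¹).mulVec ((ℓ r x)⁻¹ • v r))
    (c : Fin 2 → ℝ) (p q : Fin n) (hpq : p ≠ q)
    (hp : ℓ p c = 0) (hq : ℓ q c = 0)
    (hli : LinearIndependent ℝ ![v p, v q])
    (hpos : ∀ r, r ≠ p → r ≠ q → 0 < ℓ r c) :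
    ∀ r, r ≠ p → r ≠ q →
      Filter.Tendsto (fun x => A r x) (nhdsWithin c U) (nhds 0) := by
  intro r hrp hrq
  -- continuity of the affine functions ℓ
  have hℓcont : ∀ s, Continuous fun x => ℓ s x := by
    intro s
    simp only [hℓ]
    exact (continuous_finset_sum _ fun i _ =>
      (continuous_apply i).mul continuous_const).add continuous_const
  have hℓt : ∀ s, Filter.Tendsto (fun x => ℓ s x) (nhdsWithin c U) (nhds (ℓ s c)) :=
    fun s => ((hℓcont s).tendsto c).mono_left nhdsWithin_le_nhds
  have hUpos : ∀ x ∈ U, ∀ s, 0 < ℓ s x := by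
    intro x hx
    rw [hU] at hx
    exact hx
  -- the cross product of v p and v q is nonzero
  obtain ⟨cr, hcrdef⟩ : ∃ cr : ℝ, cr = v p 0 * v q 1 - v p 1 * v q 0 := ⟨_, rfl⟩
  have hcr : cr ≠ 0 := hcrdef ▸ cross_ne_zero_of_li hli
  have hcr2 : 0 < cr ^ 2 := by positivity
  have hrc : 0 < ℓ r c := hpos r hrp hrq
  -- numerator and denominator after multiplying by ℓ_p ℓ_q
  obtain ⟨N, hN⟩ : ∃ N : Fin 2 → (Fin 2 → ℝ) → ℝ,
      ∀ i x, N i x = ℓ p x * ℓ q x * ((H x).adjugate.mulVec (v r) i) := ⟨_, fun _ _ => rfl⟩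
  obtain ⟨D, hD⟩ : ∃ D : (Fin 2 → ℝ) → ℝ,
      ∀ x, D x = ℓ p x * ℓ q x * (H x).det := ⟨_, fun _ => rfl⟩
  -- lower bound for D on U
  have hDge : ∀ x ∈ U, cr ^ 2 / 4 ≤ D x := by
    intro x hx
    have hLpos := hUpos x hx
    have hdetge := det_lower v (fun s => ℓ s x) hLpos (H x) (fun i j => hH x i j) p q hpq
    have hpx := hLpos p
    have hqx := hLpos q
    rw [hD, hcrdef]
    calc (v p 0 * v q 1 - v p 1 * v q 0) ^ 2 / 4
        = ℓ p x * ℓ q x * ((v p 0 * v q 1 - v p 1 * v q 0) ^ 2 / (4 * ℓ p x * ℓ q x)) := by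
          field_simp
      _ ≤ ℓ p x * ℓ q x * (H x).det :=
          mul_le_mul_of_nonneg_left hdetge (by positivity)
  have hDpos : ∀ x ∈ U, 0 < D x := fun x hx =>
    lt_of_lt_of_le (div_pos hcr2 (by norm_num)) (hDge x hx)
  -- the identity for A on U
  have hAid : ∀ x ∈ U, ∀ i, A r x i = 1 / 2 * (ℓ r x)⁻¹ * (N i x / D x) := by
    intro x hx i
    have hLpos := hUpos x hx
    have hpx := hLpos p
    have hqx := hLpos q
    have hrx := (hLpos r).ne'
    have hpq0 : ℓ p x * ℓ q x ≠ 0 := by positivity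
    have hdetpos : (H x).det ≠ 0 := by
      have h1 : 0 < ℓ p x * ℓ q x * (H x).det := by
        have := hDpos x hx
        rwa [hD] at this
      nlinarith [mul_pos hpx hqx]
    rw [hN, hD, hA, Pi.smul_apply, smul_eq_mul, Matrix.mulVec_smul, Matrix.inv_def,
      Ring.inverse_eq_inv', Matrix.smul_mulVec, Pi.smul_apply, smul_eq_mul,
      Pi.smul_apply, smul_eq_mul]
    field_simp
  -- the numerator tends to zero
  have hNt : ∀ i, Filter.Tendsto (fun x => N i x) (nhdsWithin c U) (nhds 0) := by
    intro i
    obtain ⟨w, hw⟩ : ∃ w : Fin n → ℝ, ∀ s, w s = if i = 0 then v s 1 else -v s 0 :=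
      ⟨_, fun _ => rfl⟩
    obtain ⟨ψ, hψ⟩ : ∃ ψ : Fin n → (Fin 2 → ℝ) → ℝ, ∀ s x, ψ s x =
        if s = p then w s * (v r 0 * v s 1 - v r 1 * v s 0) * ℓ q x / 2
        else if s = q then w s * (v r 0 * v s 1 - v r 1 * v s 0) * ℓ p x / 2
        else w s * (v r 0 * v s 1 - v r 1 * v s 0) * (ℓ p x * ℓ q x) / (2 * ℓ s x) :=
      ⟨_, fun _ _ => rfl⟩
    have hNeq : ∀ x ∈ U, N i x = ∑ s, ψ s x := by
      intro x hx
      have hLpos := hUpos x hx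
      rw [hN, adj_mulVec_formula v (fun s => ℓ s x) (H x) (fun i j => hH x i j) (v r) i,
        Finset.mul_sum]
      refine Finset.sum_congr rfl fun s _ => ?_
      have hs := (hLpos s).ne'
      have hpx := (hLpos p).ne'
      have hqx := (hLpos q).ne'
      rw [hψ, ← hw s]
      by_cases hsp : s = p
      · rw [if_pos hsp]
        subst hsp
        field_simp
      · rw [if_neg hsp]
        by_cases hsq : s = q
        · rw [if_pos hsq]
          subst hsq
          field_simp
        · rw [if_neg hsq]
          field_simp
    have hψt : ∀ s, Filter.Tendsto (fun x => ψ s x) (nhdsWithin c U) (nhds 0) := by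
      intro s
      by_cases hsp : s = p
      · have heq : (fun x => ψ s x) =
            fun x => w s * (v r 0 * v s 1 - v r 1 * v s 0) * ℓ q x / 2 := by
          funext x
          rw [hψ, if_pos hsp]
        rw [heq]
        have := ((hℓt q).const_mul (w s * (v r 0 * v s 1 - v r 1 * v s 0))).div_const 2
        simpa [hq] using this
      · by_cases hsq : s = q
        · have heq : (fun x => ψ s x) =
              fun x => w s * (v r 0 * v s 1 - v r 1 * v s 0) * ℓ p x / 2 := by
            funext x
            rw [hψ, if_neg hsp, if_pos hsq]
          rw [heq]
          have := ((hℓt p).const_mul (w s * (v r 0 * v s 1 - v r 1 * v s 0))).div_const 2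
          simpa [hp] using this
        · have heq : (fun x => ψ s x) =
              fun x => w s * (v r 0 * v s 1 - v r 1 * v s 0) * (ℓ p x * ℓ q x) /
                (2 * ℓ s x) := by
            funext x
            rw [hψ, if_neg hsp, if_neg hsq]
          rw [heq]
          have hsc : (2 : ℝ) * ℓ s c ≠ 0 := by
            have := hpos s hsp hsq
            positivity
          have := (((hℓt p).mul (hℓt q)).const_mul
            (w s * (v r 0 * v s 1 - v r 1 * v s 0))).div ((hℓt s).const_mul 2) hsc
          simp only [hp, hq, mul_zero, zero_div] at this
          exact this
    have hsum : Filter.Tendsto (fun x => ∑ s, ψ s x) (nhdsWithin c U)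
        (nhds (∑ s : Fin n, (0 : ℝ))) := tendsto_finset_sum _ fun s _ => hψt s
    refine Filter.Tendsto.congr' ?_ (by simpa using hsum)
    exact Filter.eventuallyEq_of_mem self_mem_nhdsWithin fun x hx => (hNeq x hx).symm
  -- conclusion, componentwise squeeze
  rw [tendsto_pi_nhds]
  intro i
  simp only [Pi.zero_apply]
  obtain ⟨C, hCdef⟩ : ∃ C : ℝ, C = (ℓ r c)⁻¹ * (4 / cr ^ 2) := ⟨_, rfl⟩
  have hC0 : 0 ≤ C := by rw [hCdef]; positivity
  refine squeeze_zero_norm' (a := fun x => C * |N i x|) ?_ ?_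
  · have hev2 : ∀ᶠ x in nhdsWithin c U, ℓ r c / 2 < ℓ r x :=
      (hℓt r).eventually (eventually_gt_nhds (by linarith))
    filter_upwards [self_mem_nhdsWithin, hev2] with x hxU hxr
    have hLpos := hUpos x hxU
    have hDx := hDpos x hxU
    have hDgex := hDge x hxU
    have hrx : 0 < ℓ r x := hLpos r
    rw [Real.norm_eq_abs, hAid x hxU i]
    have habs : |1 / 2 * (ℓ r x)⁻¹ * (N i x / D x)| =
        1 / 2 * (ℓ r x)⁻¹ * (|N i x| / D x) := by
      rw [abs_mul, abs_mul, abs_div (N i x) (D x), abs_of_pos hDx, abs_of_pos (inv_pos.mpr hrx)]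
      norm_num
    rw [habs]
    have e1 : |N i x| / D x ≤ |N i x| * (4 / cr ^ 2) := by
      calc |N i x| / D x ≤ |N i x| / (cr ^ 2 / 4) :=
            div_le_div_of_nonneg_left (abs_nonneg _) (div_pos hcr2 (by norm_num)) hDgex
        _ = |N i x| * (4 / cr ^ 2) := by
            rw [div_div_eq_mul_div, div_eq_mul_inv, div_eq_mul_inv]
            ring
    have e2 : (ℓ r x)⁻¹ ≤ 2 * (ℓ r c)⁻¹ := by
      have h2 : (ℓ r x)⁻¹ ≤ (ℓ r c / 2)⁻¹ :=
        inv_anti₀ (by linarith) (le_of_lt hxr)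
      calc (ℓ r x)⁻¹ ≤ (ℓ r c / 2)⁻¹ := h2
        _ = 2 * (ℓ r c)⁻¹ := by
            rw [div_eq_mul_inv, mul_inv, inv_inv]
            ring
    calc 1 / 2 * (ℓ r x)⁻¹ * (|N i x| / D x)
        ≤ 1 / 2 * (2 * (ℓ r c)⁻¹) * (|N i x| * (4 / cr ^ 2)) := by
          gcongr
      _ = C * |N i x| := by
          rw [hCdef]
          ring
  · have := ((hNt i).abs).const_mul C
    simpa using this
end

section
/- Let K be a ℤ-module, let χ : K × K → ℤ be biadditive, and let (e_1, …, e_n) and (e_1^∨, …, e_n^∨) be families in K such that every F ∈ K admits the two decompositions F = Σ_{j=1}^n χ(e_j, F) · e_j^∨ and F = Σ_{j=1}^n χ(F, e_j^∨) · e_j. Let rk : K → ℤ be an additive map, and suppose p ∈ K satisfies rk(p) = 0 and χ(e_i, p) = rk(e_i) for all i. Then Σ_{i=1}^n Σ_{j=1}^n rk(e_i) · rk(e_j) · χ(e_j^∨, e_i^∨) = 0. In particular, if rk(e_i) = 1 for all i, the sum of all entries of the matrix χ(e_j^∨, e_i^∨) vanishes. -/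
/-- K-theory lattice form of the vanishing-Euler-character argument: if `χ` is a biadditive
pairing, `(e_i)` and `(e_i^∨)` mutually decompose every class, `rk` is additive, and `p`
is a point class (`rk p = 0`, `χ(e_i, p) = rk e_i`), then
`Σ_{i,j} rk(e_i) rk(e_j) χ(e_j^∨, e_i^∨) = 0`. -/
theorem euler_character_sum_vanishes {K : Type*} [AddCommGroup K] {n : ℕ}
    (χ : K → K → ℤ)
    (hχ₁ : ∀ a b c : K, χ (a + b) c = χ a c + χ b c)
    (hχ₂ : ∀ a b c : K, χ a (b + c) = χ a b + χ a c)
    (e edual : Fin n → K)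
    (hdec₁ : ∀ F : K, F = ∑ j, χ (e j) F • edual j)
    (hdec₂ : ∀ F : K, F = ∑ j, χ F (edual j) • e j)
    (rk : K →+ ℤ)
    (p : K) (hp : rk p = 0) (hep : ∀ i, χ (e i) p = rk (e i)) :
    ∑ i, ∑ j, rk (e i) * rk (e j) * χ (edual j) (edual i) = 0 := by
  -- left and right additive homs
  set L : K → K →+ ℤ := fun b => AddMonoidHom.mk' (fun x => χ x b) (fun x y => hχ₁ x y b)
    with hL
  set R : K → K →+ ℤ := fun a => AddMonoidHom.mk' (fun x => χ a x) (fun x y => hχ₂ a x y)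
    with hR
  have hLs : ∀ (m : ℤ) a b, χ (m • a) b = m * χ a b := by
    intro m a b
    have h := (L b).map_zsmul m a
    rw [smul_eq_mul] at h
    exact h
  have hRs : ∀ (m : ℤ) a b, χ a (m • b) = m * χ a b := by
    intro m a b
    have h := (R a).map_zsmul m b
    rw [smul_eq_mul] at h
    exact h
  have hLsum : ∀ (f : Fin n → K) b, χ (∑ j, f j) b = ∑ j, χ (f j) b := by
    intro f b
    exact map_sum (L b) f Finset.univ
  have hRsum : ∀ a (f : Fin n → K), χ a (∑ j, f j) = ∑ j, χ a (f j) := by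
    intro a f
    exact map_sum (R a) f Finset.univ
  -- p = Σ rk(e_j) • edual j
  have hpdec : p = ∑ j, (rk (e j) : ℤ) • edual j := by
    rw [hdec₁ p]
    exact Finset.sum_congr rfl fun j _ => by rw [hep j]
  -- χ(p, p) equals the double sum
  have key : χ p p = ∑ i, ∑ j, rk (e i) * rk (e j) * χ (edual j) (edual i) := by
    conv_lhs => rw [hpdec]
    rw [hRsum]
    refine Finset.sum_congr rfl fun i _ => ?_
    rw [hRs, hLsum]
    rw [Finset.mul_sum]
    refine Finset.sum_congr rfl fun j _ => ?_
    rw [hLs]; ring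
  -- χ(p, p) = rk p = 0 via second decomposition
  have h1 : ∀ a : K, χ a p = ∑ j, χ a (edual j) * rk (e j) := by
    intro a
    conv_lhs => rw [hdec₂ a]
    rw [hLsum]
    exact Finset.sum_congr rfl fun j _ => by rw [hLs, hep]
  have hzero : χ p p = 0 := by
    rw [h1 p]
    have : rk p = ∑ j, χ p (edual j) * rk (e j) := by
      conv_lhs => rw [hdec₂ p]
      rw [map_sum]
      exact Finset.sum_congr rfl fun j _ => by simp [mul_comm]
    rw [← this, hp]
  rw [← key, hzero]
end
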